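/- Strong duality / dual characterization: X is the minimizer of the entropy-regularized OT problem over the positive transport polytope if and only if there exist potentials α : I → ℝ and β : [m] → ℝ (with β_m = 0 allowed as normalization for the dummy column) such that x_{ik} = exp((α_i + β_k − c_{ik})/ε) and X satisfies the marginal constraints. -/

import Mathlib

lemma lemA (a b : ℝ) (ha : 0 < a) (hb : 0 < b) :
    Real.log a * (b - a) ≤ b * (Real.log b - 1) - a * (Real.log a - 1) := by
  have h1 : Real.log (a / b) ≤ a / b - 1 := Real.log_le_sub_one_of_pos (by positivity)
  rw [Real.log_div ha.ne' hb.ne'] at h1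
  have h3 : b * (Real.log a - Real.log b) ≤ b * (a / b - 1) :=
    mul_le_mul_of_nonneg_left h1 hb.le
  have h4 : b * (a / b) = a := by field_simp
  nlinarith

lemma lemB (μ a t : ℝ) (hμ : 0 < μ) (ha : μ ≤ a) (ht : |t| ≤ μ / 2) :
    μ * |Real.log (a + t) - Real.log a| ≤ 2 * |t| := by
  have habs := abs_le.mp ht
  have ha0 : 0 < a := lt_of_lt_of_le hμ ha
  have hat : 0 < a + t := by linarith [habs.1]
  have u1 : Real.log (a + t) - Real.log a ≤ (a + t) / a - 1 := by
    have := Real.log_le_sub_one_of_pos (show 0 < (a + t) / a by positivity)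
    rwa [Real.log_div hat.ne' ha0.ne'] at this
  have u2 : Real.log a - Real.log (a + t) ≤ a / (a + t) - 1 := by
    have := Real.log_le_sub_one_of_pos (show 0 < a / (a + t) by positivity)
    rwa [Real.log_div ha0.ne' hat.ne'] at this
  set L := Real.log (a + t) - Real.log a with hL
  have u1' : a * L ≤ t := by
    have h : a * ((a + t) / a - 1) = t := by field_simp; ring
    nlinarith [mul_le_mul_of_nonneg_left u1 ha0.le]
  have u2' : (a + t) * (-L) ≤ -t := by
    have h : (a + t) * (a / (a + t) - 1) = -t := by field_simp; ring
    nlinarith [mul_le_mul_of_nonneg_left u2 hat.le]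
  have htabs := le_abs_self t
  have hntabs := neg_abs_le t
  rcases abs_cases L with ⟨hc, hs⟩ | ⟨hc, hs⟩
  · rw [hc]
    nlinarith [mul_le_mul_of_nonneg_right ha hs]
  · rw [hc]
    have h2 : μ / 2 ≤ a + t := by linarith [habs.1]
    nlinarith [mul_le_mul_of_nonneg_right h2 (by linarith : 0 ≤ -L)]

lemma sum4 {n : Type*} [Fintype n] [DecidableEq n] (w : n → ℝ) (k l : n) :
    ∑ k', w k' * ((if k' = k then (1:ℝ) else 0) - (if k' = l then 1 else 0)) = w k - w l := by
  simp [mul_sub, Finset.sum_sub_distrib, mul_ite, mul_one, mul_zero, Finset.sum_ite_eq']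

lemma col_marginal {I : Type*} [Fintype I] (m : ℕ) (X Y : I → Fin m → ℝ)
    (hX1 : ∀ i, ∑ k, X i k = 1) (hX2 : ∀ k : Fin m, (k : ℕ) < m - 1 → ∑ i, X i k = 1)
    (hY1 : ∀ i, ∑ k, Y i k = 1) (hY2 : ∀ k : Fin m, (k : ℕ) < m - 1 → ∑ i, Y i k = 1)
    (k : Fin m) : ∑ i, X i k = ∑ i, Y i k := by
  by_cases hk : (k : ℕ) < m - 1
  · rw [hX2 k hk, hY2 k hk]
  · have htot : ∑ j : Fin m, (∑ i, X i j - ∑ i, Y i j) = 0 := by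
      rw [Finset.sum_sub_distrib, Finset.sum_comm, Finset.sum_comm (f := fun j i => Y i j)]
      simp [hX1, hY1]
    have hrest : ∀ j ∈ Finset.univ.erase k, (∑ i, X i j - ∑ i, Y i j) = 0 := by
      intro j hj
      have hjk : j ≠ k := Finset.ne_of_mem_erase hj
      have hjv : (j : ℕ) ≠ (k : ℕ) := fun h => hjk (Fin.ext h)
      have h1 := j.isLt
      have h2 := k.isLt
      have : (j : ℕ) < m - 1 := by omega
      rw [hX2 _ this, hY2 _ this]; ring
    have hsplit := Finset.add_sum_erase Finset.univ
      (fun j => ∑ i, X i j - ∑ i, Y i j) (Finset.mem_univ k)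
    rw [Finset.sum_eq_zero hrest] at hsplit
    rw [htot] at hsplit
    simp only [add_zero] at hsplit
    linarith [hsplit]

private lemma quad_lemma
    {I : Type*} [Fintype I] (m : ℕ) (ε : ℝ) (hε : 0 < ε)
    (c : I → Fin m → ℝ)
    (f : (I → Fin m → ℝ) → ℝ)
    (X : I → Fin m → ℝ)
    (hF : ∀ Z : I → Fin m → ℝ, f Z =
      ∑ i, ∑ k, (c i k * Z i k + ε * (Z i k * (Real.log (Z i k) - 1))))
    (hXpos : ∀ i k, 0 < X i k) (hXrow : ∀ i, ∑ k, X i k = 1)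
    (hXcol : ∀ k : Fin m, (k : ℕ) < m - 1 → ∑ i, X i k = 1)
    (hmin : ∀ Y : I → Fin m → ℝ, ((∀ i k, 0 < Y i k) ∧ (∀ i, ∑ k, Y i k = 1) ∧
        (∀ k : Fin m, (k : ℕ) < m - 1 → ∑ i, Y i k = 1)) → f X ≤ f Y)
    (g : I → Fin m → ℝ) (hg : g = fun i k => c i k + ε * Real.log (X i k))
    (i j : I) (k l : Fin m) :
    g i k + g j l = g i l + g j k := by
  classical
  by_cases hij : i = j
  · subst hij; ring
  by_cases hkl : k = l
  · subst hkl; ring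
  by_contra hne
  obtain ⟨g0, hg0def⟩ : ∃ x : ℝ, x = g i k + g j l - (g i l + g j k) := ⟨_, rfl⟩
  have hg0ne : g0 ≠ 0 := by rw [hg0def]; exact sub_ne_zero_of_ne hne
  have hg0sq : 0 < g0 ^ 2 := by positivity
  obtain ⟨a, hadef⟩ : ∃ x : ℝ, x = X i k := ⟨_, rfl⟩
  obtain ⟨b, hbdef⟩ : ∃ x : ℝ, x = X i l := ⟨_, rfl⟩
  obtain ⟨c2, hc2def⟩ : ∃ x : ℝ, x = X j k := ⟨_, rfl⟩
  obtain ⟨d2, hd2def⟩ : ∃ x : ℝ, x = X j l := ⟨_, rfl⟩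
  obtain ⟨μ, hμdef⟩ : ∃ x : ℝ, x = min (min a b) (min c2 d2) := ⟨_, rfl⟩
  have hμ : 0 < μ := by
    rw [hμdef, hadef, hbdef, hc2def, hd2def]
    exact lt_min (lt_min (hXpos i k) (hXpos i l)) (lt_min (hXpos j k) (hXpos j l))
  have hmua : μ ≤ a := hμdef ▸ le_trans (min_le_left _ _) (min_le_left _ _)
  have hmub : μ ≤ b := hμdef ▸ le_trans (min_le_left _ _) (min_le_right _ _)
  have hmuc : μ ≤ c2 := hμdef ▸ le_trans (min_le_right _ _) (min_le_left _ _)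
  have hmud : μ ≤ d2 := hμdef ▸ le_trans (min_le_right _ _) (min_le_right _ _)
  have hg0abs : 0 < |g0| := abs_pos.mpr hg0ne
  obtain ⟨s, hsdef⟩ : ∃ x : ℝ, x = min (μ / (16 * ε)) (μ / (2 * |g0|)) := ⟨_, rfl⟩
  have hs : 0 < s := by rw [hsdef]; exact lt_min (by positivity) (by positivity)
  have h16 : 16 * ε * s ≤ μ := by
    have h : s ≤ μ / (16 * ε) := hsdef ▸ min_le_left _ _
    rw [le_div_iff₀ (by positivity)] at h
    linarith
  have h2g : 2 * |g0| * s ≤ μ := by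
    have h : s ≤ μ / (2 * |g0|) := hsdef ▸ min_le_right _ _
    rw [le_div_iff₀ (by positivity)] at h
    linarith
  obtain ⟨t, htdef⟩ : ∃ x : ℝ, x = -(s * g0) := ⟨_, rfl⟩
  have habs_t : |t| = s * |g0| := by
    rw [htdef, abs_neg, abs_mul, abs_of_pos hs]
  have ht2 : |t| ≤ μ / 2 := by rw [habs_t]; nlinarith
  set e : I → ℝ := fun i' => (if i' = i then (1:ℝ) else 0) - (if i' = j then 1 else 0)
    with hedef
  set d : Fin m → ℝ := fun k' => (if k' = k then (1:ℝ) else 0) - (if k' = l then 1 else 0)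
    with hddef
  set Y : I → Fin m → ℝ := fun i' k' => X i' k' + t * e i' * d k' with hYdef
  have he0 : ∀ i', e i' ≠ 0 → (i' = i ∨ i' = j) := by
    intro i' h
    by_contra hcon
    push_neg at hcon
    simp [hedef, hcon.1, hcon.2] at h
  have hd0 : ∀ k', d k' ≠ 0 → (k' = k ∨ k' = l) := by
    intro k' h
    by_contra hcon
    push_neg at hcon
    simp [hddef, hcon.1, hcon.2] at h
  have hee : ∀ i', |e i'| ≤ 1 := by
    intro i'; rw [hedef]; dsimp only; split_ifs <;> norm_num
  have hdd : ∀ k', |d k'| ≤ 1 := by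
    intro k'; rw [hddef]; dsimp only; split_ifs <;> norm_num
  have hYpos : ∀ i' k', 0 < Y i' k' := by
    intro i' k'
    show 0 < X i' k' + t * e i' * d k'
    by_cases hz : e i' * d k' = 0
    · have hzz : t * e i' * d k' = 0 := by rw [mul_assoc, hz, mul_zero]
      rw [hzz, add_zero]; exact hXpos i' k'
    · rcases mul_ne_zero_iff.mp hz with ⟨hez, hdz⟩
      have hXμ : μ ≤ X i' k' := by
        rcases he0 i' hez with rfl | rfl <;> rcases hd0 k' hdz with rfl | rfl
        exacts [hadef ▸ hmua, hbdef ▸ hmub, hc2def ▸ hmuc, hd2def ▸ hmud]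
      have habs : |t * e i' * d k'| ≤ |t| := by
        rw [abs_mul, abs_mul]
        have q1 : |t| * |e i'| ≤ |t| := mul_le_of_le_one_right (abs_nonneg t) (hee i')
        have q2 : |t| * |e i'| * |d k'| ≤ |t| * |e i'| :=
          mul_le_of_le_one_right (by positivity) (hdd k')
        linarith
      have h1 := (abs_le.mp habs).1
      have h2 := (abs_le.mp ht2).1
      linarith
  have he_sum : ∑ i', e i' = 0 := by
    rw [hedef, Finset.sum_sub_distrib]
    simp [Finset.sum_ite_eq']
  have hd_sum : ∑ k', d k' = 0 := by
    rw [hddef, Finset.sum_sub_distrib]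
    simp [Finset.sum_ite_eq']
  have hYrow : ∀ i', ∑ k', Y i' k' = 1 := by
    intro i'
    show ∑ k', (X i' k' + t * e i' * d k') = 1
    rw [Finset.sum_add_distrib, hXrow, ← Finset.mul_sum, hd_sum, mul_zero, add_zero]
  have hYcol : ∀ k' : Fin m, (k' : ℕ) < m - 1 → ∑ i', Y i' k' = 1 := by
    intro k' hk'
    show ∑ i', (X i' k' + t * e i' * d k') = 1
    rw [Finset.sum_add_distrib, hXcol k' hk']
    have h : ∀ i', t * e i' * d k' = (t * d k') * e i' := fun i' => by ring
    rw [Finset.sum_congr rfl fun i' _ => h i', ← Finset.mul_sum, he_sum, mul_zero, add_zero]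
  have hfmin := hmin Y ⟨hYpos, hYrow, hYcol⟩
  set w : I → Fin m → ℝ := fun i' k' => c i' k' + ε * Real.log (Y i' k') with hwdef
  have hkey : f Y - f X ≤ ∑ i', ∑ k', w i' k' * (Y i' k' - X i' k') := by
    rw [hF, hF, ← Finset.sum_sub_distrib]
    refine Finset.sum_le_sum fun i' _ => ?_
    rw [← Finset.sum_sub_distrib]
    refine Finset.sum_le_sum fun k' _ => ?_
    have hA := lemA (Y i' k') (X i' k') (hYpos i' k') (hXpos i' k')
    have hAe := mul_le_mul_of_nonneg_left hA hε.le
    show c i' k' * Y i' k' + ε * (Y i' k' * (Real.log (Y i' k') - 1)) -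
        (c i' k' * X i' k' + ε * (X i' k' * (Real.log (X i' k') - 1))) ≤
        (c i' k' + ε * Real.log (Y i' k')) * (Y i' k' - X i' k')
    nlinarith
  have hsum : ∑ i', ∑ k', w i' k' * (Y i' k' - X i' k')
      = t * (w i k - w i l - (w j k - w j l)) := by
    have hinner : ∀ i', ∑ k', w i' k' * (Y i' k' - X i' k')
        = (fun i'' => t * (w i'' k - w i'' l)) i' * e i' := by
      intro i'
      have h1 : ∀ k', w i' k' * (Y i' k' - X i' k') = (t * e i') * (w i' k' * d k') := by
        intro k'
        have h2 : Y i' k' - X i' k' = t * e i' * d k' := by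
          show X i' k' + _ - X i' k' = _; ring
        rw [h2]; ring
      rw [Finset.sum_congr rfl fun k' _ => h1 k', ← Finset.mul_sum]
      rw [show ∑ k', w i' k' * d k' = w i' k - w i' l from sum4 (w i') k l]
      ring
    rw [Finset.sum_congr rfl fun i' _ => hinner i']
    rw [show ∑ i', (fun i'' => t * (w i'' k - w i'' l)) i' * e i'
        = (fun i'' => t * (w i'' k - w i'' l)) i - (fun i'' => t * (w i'' k - w i'' l)) j
        from sum4 _ i j]
    ring
  have hYik : Y i k = a + t := by
    rw [hadef]; simp [hYdef, hedef, hddef, hij, hkl]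
  have hYil : Y i l = b + (-t) := by
    rw [hbdef]; simp [hYdef, hedef, hddef, hij, Ne.symm hkl]
  have hYjk : Y j k = c2 + (-t) := by
    rw [hc2def]; simp [hYdef, hedef, hddef, Ne.symm hij, hkl]
  have hYjl : Y j l = d2 + t := by
    rw [hd2def]; simp [hYdef, hedef, hddef, Ne.symm hij, Ne.symm hkl]
  obtain ⟨L1, hL1⟩ : ∃ x : ℝ, x = Real.log (a + t) - Real.log a := ⟨_, rfl⟩
  obtain ⟨L2, hL2⟩ : ∃ x : ℝ, x = Real.log (b + (-t)) - Real.log b := ⟨_, rfl⟩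
  obtain ⟨L3, hL3⟩ : ∃ x : ℝ, x = Real.log (c2 + (-t)) - Real.log c2 := ⟨_, rfl⟩
  obtain ⟨L4, hL4⟩ : ∃ x : ℝ, x = Real.log (d2 + t) - Real.log d2 := ⟨_, rfl⟩
  obtain ⟨B, hB⟩ : ∃ x : ℝ, x = L1 - L2 - L3 + L4 := ⟨_, rfl⟩
  have hwg : w i k - w i l - (w j k - w j l) = g0 + ε * B := by
    rw [hwdef]
    dsimp only
    rw [hYik, hYil, hYjk, hYjl, hg0def, hg, hB, hL1, hL2, hL3, hL4, hadef, hbdef, hc2def, hd2def]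
    dsimp only
    ring
  have htneg : |(-t)| ≤ μ / 2 := by rwa [abs_neg]
  have hB1 : μ * |L1| ≤ 2 * |t| := hL1 ▸ lemB μ a t hμ hmua ht2
  have hB2 : μ * |L2| ≤ 2 * |t| := by
    have h := lemB μ b (-t) hμ hmub htneg
    rw [abs_neg] at h
    exact hL2 ▸ h
  have hB3 : μ * |L3| ≤ 2 * |t| := by
    have h := lemB μ c2 (-t) hμ hmuc htneg
    rw [abs_neg] at h
    exact hL3 ▸ h
  have hB4 : μ * |L4| ≤ 2 * |t| := hL4 ▸ lemB μ d2 t hμ hmud ht2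
  have hBabs : |B| ≤ |L1| + |L2| + |L3| + |L4| := by
    rw [hB]
    calc |L1 - L2 - L3 + L4| ≤ |L1 - L2 - L3| + |L4| := abs_add_le _ _
    _ ≤ (|L1 - L2| + |L3|) + |L4| := by linarith [abs_sub (L1 - L2) L3]
    _ ≤ ((|L1| + |L2|) + |L3|) + |L4| := by linarith [abs_sub L1 L2]
  have hμB : μ * |B| ≤ 8 * |t| := by
    have h7 := mul_le_mul_of_nonneg_left hBabs hμ.le
    have e7 : μ * (|L1| + |L2| + |L3| + |L4|)
        = μ * |L1| + μ * |L2| + μ * |L3| + μ * |L4| := by ring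
    rw [e7] at h7
    linarith
  have hchain : 0 ≤ t * (g0 + ε * B) := by
    rw [← hwg, ← hsum]
    linarith [hkey]
  have h5 : μ * (t * B) ≤ 8 * t ^ 2 := by
    have h6 : μ * (t * B) ≤ μ * |t * B| := mul_le_mul_of_nonneg_left (le_abs_self _) hμ.le
    rw [abs_mul] at h6
    have h8 : μ * (|t| * |B|) = |t| * (μ * |B|) := by ring
    have h9 : |t| * (μ * |B|) ≤ |t| * (8 * |t|) := mul_le_mul_of_nonneg_left hμB (abs_nonneg t)
    have h10 : |t| * (8 * |t|) = 8 * t ^ 2 := by rw [← sq_abs t]; ring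
    linarith
  have hμchain : 0 ≤ μ * t * g0 + ε * (μ * (t * B)) := by
    have h11 := mul_le_mul_of_nonneg_left hchain hμ.le
    have e11 : μ * (t * (g0 + ε * B)) = μ * t * g0 + ε * (μ * (t * B)) := by ring
    rw [e11, mul_zero] at h11
    exact h11
  clear hF hmin hfmin hkey hsum hYrow hYcol hYpos he0 hd0 hee hdd he_sum hd_sum
  clear hYik hYil hYjk hYjl hwg hwdef hYdef hedef hddef w Y e d hg hXpos hXrow hXcol hne
  have htg : μ * t * g0 = -(μ * s * g0 ^ 2) := by rw [htdef]; ring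
  have ht2' : t ^ 2 = s ^ 2 * g0 ^ 2 := by rw [htdef]; ring
  have hA1 : ε * (μ * (t * B)) ≤ ε * (8 * t ^ 2) := mul_le_mul_of_nonneg_left h5 hε.le
  have hQ0 : 0 ≤ μ * t * g0 + ε * (8 * t ^ 2) := by linarith
  have e1 : μ * t * g0 + ε * (8 * t ^ 2)
      = -(μ * s * g0 ^ 2) + 8 * (ε * (s ^ 2 * g0 ^ 2)) := by rw [htg, ht2']; ring
  have hQ : 0 ≤ -(μ * s * g0 ^ 2) + 8 * (ε * (s ^ 2 * g0 ^ 2)) := e1 ▸ hQ0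
  have hA2 := mul_le_mul_of_nonneg_right h16 (mul_pos hs hg0sq).le
  have e2 : 16 * ε * s * (s * g0 ^ 2) = 16 * (ε * (s ^ 2 * g0 ^ 2)) := by ring
  have e3 : μ * (s * g0 ^ 2) = μ * s * g0 ^ 2 := by ring
  rw [e2, e3] at hA2
  have hpos : 0 < μ * s * g0 ^ 2 := by positivity
  linarith

theorem entropic_ot_dual_characterization
    {I : Type*} [Fintype I] (m : ℕ) (ε : ℝ) (hε : 0 < ε)
    (c : I → Fin m → ℝ)
    (P : Set (I → Fin m → ℝ))
    (hP : P = {X | (∀ i k, 0 < X i k) ∧ (∀ i, ∑ k, X i k = 1) ∧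
        (∀ k : Fin m, (k : ℕ) < m - 1 → ∑ i, X i k = 1)})
    (f : (I → Fin m → ℝ) → ℝ)
    (hf : ∀ X, f X = (∑ i, ∑ k, c i k * X i k) +
        ε * ∑ i, ∑ k, X i k * (Real.log (X i k) - 1))
    (X : I → Fin m → ℝ) :
    (X ∈ P ∧ ∀ Y ∈ P, f X ≤ f Y) ↔
    (X ∈ P ∧ ∃ α : I → ℝ, ∃ β : Fin m → ℝ,
      ∀ i k, X i k = Real.exp ((α i + β k - c i k) / ε)) := by
  subst hP
  have hF : ∀ Z : I → Fin m → ℝ, f Z =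
      ∑ i, ∑ k, (c i k * Z i k + ε * (Z i k * (Real.log (Z i k) - 1))) := by
    intro Z
    rw [hf, Finset.mul_sum, ← Finset.sum_add_distrib]
    refine Finset.sum_congr rfl fun i _ => ?_
    rw [Finset.mul_sum, ← Finset.sum_add_distrib]
  constructor
  · rintro ⟨hXP, hmin⟩
    refine ⟨hXP, ?_⟩
    obtain ⟨hXpos, hXrow, hXcol⟩ := hXP
    have hmin' : ∀ Y : I → Fin m → ℝ, ((∀ i k, 0 < Y i k) ∧ (∀ i, ∑ k, Y i k = 1) ∧
        (∀ k : Fin m, (k : ℕ) < m - 1 → ∑ i, Y i k = 1)) → f X ≤ f Y :=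
      fun Y hY => hmin Y hY
    set gg : I → Fin m → ℝ := fun i k => c i k + ε * Real.log (X i k) with hggdef
    have hquad : ∀ i j k l, gg i k + gg j l = gg i l + gg j k := fun i j k l =>
      quad_lemma m ε hε c f X hF hXpos hXrow hXcol hmin' gg hggdef i j k l
    rcases isEmpty_or_nonempty I with hI | hI
    · exact ⟨fun _ => 0, fun _ => 0, fun i k => isEmptyElim i⟩
    rcases isEmpty_or_nonempty (Fin m) with hm | hm
    · exact ⟨fun _ => 0, fun _ => 0, fun i k => isEmptyElim k⟩
    obtain ⟨i0⟩ := hI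
    obtain ⟨k0⟩ := hm
    refine ⟨fun i => gg i k0 - gg i0 k0, fun k => gg i0 k, fun i k => ?_⟩
    have hq := hquad i i0 k k0
    have hggik : gg i k = c i k + ε * Real.log (X i k) := by rw [hggdef]
    have hnum : gg i k0 - gg i0 k0 + gg i0 k - c i k = ε * Real.log (X i k) := by
      linarith
    rw [hnum, mul_div_cancel_left₀ _ hε.ne', Real.exp_log (hXpos i k)]
  · rintro ⟨hXP, α, β, hαβ⟩
    refine ⟨hXP, ?_⟩
    intro Y hYP
    obtain ⟨hXpos, hXrow, hXcol⟩ := hXP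
    obtain ⟨hYpos, hYrow, hYcol⟩ := hYP
    have hgrad : ∀ i k, c i k + ε * Real.log (X i k) = α i + β k := by
      intro i k
      rw [hαβ i k, Real.log_exp, mul_div_cancel₀ _ hε.ne']
      ring
    have key : ∑ i, ∑ k, ((α i + β k) * (Y i k - X i k)) ≤ f Y - f X := by
      rw [hF, hF, ← Finset.sum_sub_distrib]
      refine Finset.sum_le_sum fun i _ => ?_
      rw [← Finset.sum_sub_distrib]
      refine Finset.sum_le_sum fun k _ => ?_
      have hA := lemA (X i k) (Y i k) (hXpos i k) (hYpos i k)
      rw [← hgrad i k]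
      nlinarith [mul_le_mul_of_nonneg_left hA hε.le]
    have hzero : ∑ i, ∑ k, ((α i + β k) * (Y i k - X i k)) = 0 := by
      have hsplit : ∀ i k, (α i + β k) * (Y i k - X i k)
          = α i * (Y i k - X i k) + β k * (Y i k - X i k) := fun i k => by ring
      simp only [hsplit, Finset.sum_add_distrib]
      have h1 : ∑ i, ∑ k, α i * (Y i k - X i k) = 0 := by
        refine Finset.sum_eq_zero fun i _ => ?_
        rw [← Finset.mul_sum, Finset.sum_sub_distrib, hYrow, hXrow]
        ring
      have h2 : ∑ i, ∑ k, β k * (Y i k - X i k) = 0 := by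
        rw [Finset.sum_comm]
        refine Finset.sum_eq_zero fun k _ => ?_
        rw [← Finset.mul_sum, Finset.sum_sub_distrib,
          col_marginal m X Y hXrow hXcol hYrow hYcol k]
        ring
      rw [h1, h2, add_zero]
    linarith [hzero ▸ key]
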